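/- arXiv:1603.04301 — 3 statements merged into one kernel-verified Lean document; each statement's English description precedes it below -/
import Mathlib

section
/- Let G be a simple connected graph on n vertices that is not a complete graph. Then the second smallest normalized Laplacian eigenvalue satisfies λ₂(G) ≤ 1. -/
open Matrix Finset BigOperators

namespace NLap

variable {V : Type} [Fintype V] [DecidableEq V]

/-- The normalized Laplacian matrix `𝓛(G) = D^{-1/2} (D - A) D^{-1/2}` of a simple graph. -/
noncomputable def normLap (G : SimpleGraph V) [DecidableRel G.Adj] : Matrix V V ℝ :=
  Matrix.diagonal (fun v => (Real.sqrt (G.degree v : ℝ))⁻¹) * G.lapMatrix ℝ *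
    Matrix.diagonal (fun v => (Real.sqrt (G.degree v : ℝ))⁻¹)

/-- The `k`-th smallest eigenvalue (1-indexed, counted with multiplicity) of a real matrix:
the `k`-th element of the sorted multiset of roots of its characteristic polynomial. -/
noncomputable def nthEig (M : Matrix V V ℝ) (k : ℕ) : ℝ :=
  (M.charpoly.roots.sort (· ≤ ·)).getD (k - 1) 0

/-- `λ₂(G)`, the second smallest normalized Laplacian eigenvalue. -/
noncomputable def lambda2 (G : SimpleGraph V) [DecidableRel G.Adj] : ℝ :=
  nthEig (normLap G) 2

/-- `ρ(𝓛(G)) = λ_n(G)`, the normalized Laplacian spectral radius. -/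
noncomputable def rhoL (G : SimpleGraph V) [DecidableRel G.Adj] : ℝ :=
  nthEig (normLap G) (Fintype.card V)

/-- `f` is a harmonic eigenfunction associated with the eigenvalue `lam` of `𝓛(G)`:
`f ≠ 0` and `L f = lam • D f`. -/
def IsHarmonic (G : SimpleGraph V) [DecidableRel G.Adj] (lam : ℝ) (f : V → ℝ) : Prop :=
  f ≠ 0 ∧ G.lapMatrix ℝ *ᵥ f = fun v => lam * ((G.degree v : ℝ) * f v)

/-- `∑_{uv ∈ E(G)} (f(u) - f(v))²`. -/
noncomputable def edgeSum (G : SimpleGraph V) [DecidableRel G.Adj] (f : V → ℝ) : ℝ :=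
  ∑ e ∈ G.edgeFinset, Sym2.lift ⟨fun u v => (f u - f v) ^ 2, fun u v => by ring⟩ e


/-- The graph obtained from `G` by subdividing the edge `uv`:
delete `uv`, add a new vertex `w = Sum.inr ()` and the edges `uw`, `wv`. -/
def subdivide {V : Type} (G : SimpleGraph V) (u v : V) : SimpleGraph (V ⊕ Unit) where
  Adj x y :=
    match x, y with
    | Sum.inl a, Sum.inl b => G.Adj a b ∧ ¬(a = u ∧ b = v) ∧ ¬(a = v ∧ b = u)
    | Sum.inl a, Sum.inr _ => a = u ∨ a = v
    | Sum.inr _, Sum.inl b => b = u ∨ b = v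
    | Sum.inr _, Sum.inr _ => False
  symm := by
    constructor
    rintro (a | a) (b | b) h
    · exact ⟨h.1.symm, fun hc => h.2.2 ⟨hc.2, hc.1⟩, fun hc => h.2.1 ⟨hc.2, hc.1⟩⟩
    · exact h
    · exact h
    · exact h
  loopless := by
    constructor
    rintro (a | a) h
    · exact G.loopless.irrefl a h.1
    · exact h

instance {V : Type} [DecidableEq V] (G : SimpleGraph V) [DecidableRel G.Adj] (u v : V) :
    DecidableRel (subdivide G u v).Adj := fun x y => by
  rcases x with a | a <;> rcases y with b | b
  · exact inferInstanceAs (Decidable (G.Adj a b ∧ ¬(a = u ∧ b = v) ∧ ¬(a = v ∧ b = u)))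
  · exact inferInstanceAs (Decidable (a = u ∨ a = v))
  · exact inferInstanceAs (Decidable (b = u ∨ b = v))
  · exact inferInstanceAs (Decidable False)

/-- `IsSubdivisionOf H G` : `H` is obtained from `G` (up to isomorphism) by repeatedly
subdividing edges. -/
inductive IsSubdivisionOf : {V W : Type} → SimpleGraph W → SimpleGraph V → Prop
  | iso {V W : Type} {G : SimpleGraph V} {H : SimpleGraph W} :
      Nonempty (G ≃g H) → IsSubdivisionOf H G
  | step {V W : Type} {G : SimpleGraph V} {H : SimpleGraph W} (u v : V) :
      G.Adj u v → IsSubdivisionOf H (subdivide G u v) → IsSubdivisionOf H G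

/-- The graph obtained from `G₁` and `G₂` by identifying `u ∈ V(G₁)` with `v ∈ V(G₂)`;
the merged vertex is `Sum.inl u`. -/
def glue {V₁ V₂ : Type} (G₁ : SimpleGraph V₁) (G₂ : SimpleGraph V₂) (u : V₁) (v : V₂) :
    SimpleGraph (V₁ ⊕ {y : V₂ // y ≠ v}) where
  Adj x y :=
    match x, y with
    | Sum.inl a, Sum.inl b => G₁.Adj a b
    | Sum.inl a, Sum.inr b => a = u ∧ G₂.Adj v b.1
    | Sum.inr a, Sum.inl b => b = u ∧ G₂.Adj v a.1
    | Sum.inr a, Sum.inr b => G₂.Adj a.1 b.1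
  symm := by
    constructor
    rintro (a | a) (b | b) h
    · exact h.symm
    · exact h
    · exact h
    · exact h.symm
  loopless := by
    constructor
    rintro (a | a) h
    · exact G₁.loopless.irrefl a h
    · exact G₂.loopless.irrefl a.1 h

instance {V₁ V₂ : Type} [DecidableEq V₁] (G₁ : SimpleGraph V₁) (G₂ : SimpleGraph V₂)
    [DecidableRel G₁.Adj] [DecidableRel G₂.Adj] (u : V₁) (v : V₂) :
    DecidableRel (glue G₁ G₂ u v).Adj := fun x y => by
  rcases x with a | a <;> rcases y with b | b
  · exact inferInstanceAs (Decidable (G₁.Adj a b))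
  · exact inferInstanceAs (Decidable (a = u ∧ G₂.Adj v b.1))
  · exact inferInstanceAs (Decidable (b = u ∧ G₂.Adj v a.1))
  · exact inferInstanceAs (Decidable (G₂.Adj a.1 b.1))

/-- The graph `G - vv₁ - ⋯ - vvₛ + uv₁ + ⋯ + uvₛ`, where `S = {v₁, …, vₛ}`. -/
def shiftEdges {V : Type} [DecidableEq V] (G : SimpleGraph V) (u v : V) (S : Finset V) :
    SimpleGraph V where
  Adj x y := x ≠ y ∧
    ((G.Adj x y ∧ ¬(x = v ∧ y ∈ S) ∧ ¬(y = v ∧ x ∈ S)) ∨ (x = u ∧ y ∈ S) ∨ (y = u ∧ x ∈ S))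
  symm := by
    constructor
    rintro x y ⟨hxy, h⟩
    refine ⟨hxy.symm, ?_⟩
    rcases h with h | h | h
    · exact Or.inl ⟨h.1.symm, h.2.2, h.2.1⟩
    · exact Or.inr (Or.inr h)
    · exact Or.inr (Or.inl h)
  loopless := ⟨fun x h => h.1 rfl⟩

instance {V : Type} [DecidableEq V] (G : SimpleGraph V) [DecidableRel G.Adj] (u v : V)
    (S : Finset V) : DecidableRel (shiftEdges G u v S).Adj := fun x y =>
  inferInstanceAs (Decidable (_ ∧ _))

/-- The star on `n + 1` vertices, with center `none`. -/
def starGraph (n : ℕ) : SimpleGraph (Option (Fin n)) where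
  Adj i j := (i = none ∧ j ≠ none) ∨ (j = none ∧ i ≠ none)
  symm := by
    constructor
    rintro i j (h | h)
    · exact Or.inr h
    · exact Or.inl h
  loopless := by
    constructor
    rintro i (h | h) <;> exact h.2 h.1

instance (n : ℕ) : DecidableRel (starGraph n).Adj := fun i j =>
  inferInstanceAs (Decidable (_ ∨ _))



section Aux

open Polynomial
open scoped RealInnerProductSpace

set_option linter.unusedSectionVars false

variable {n : Type} [Fintype n] [DecidableEq n]

lemma inner_eq_dot (y z : EuclideanSpace ℝ n) : ⟪y, z⟫ = ∑ i, y i * z i := by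
  simp [PiLp.inner_apply, RCLike.inner_apply, starRingEnd_apply, mul_comm]

lemma toEuclideanLin_basis {A : Matrix n n ℝ} (hA : A.IsHermitian) (i : n) :
    Matrix.toEuclideanLin A (hA.eigenvectorBasis i) =
      hA.eigenvalues i • hA.eigenvectorBasis i := by
  apply PiLp.ext
  intro j
  have := congr_fun (hA.mulVec_eigenvectorBasis i) j
  simpa [Matrix.toEuclideanLin_apply] using this

lemma quadform_spectral {A : Matrix n n ℝ} (hA : A.IsHermitian) (x : EuclideanSpace ℝ n) :
    ⟪x, Matrix.toEuclideanLin A x⟫ =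
      ∑ i, hA.eigenvalues i * ⟪hA.eigenvectorBasis i, x⟫ ^ 2 := by
  have hsym := (Matrix.isHermitian_iff_isSymmetric.1 hA)
  rw [← (hA.eigenvectorBasis).sum_inner_mul_inner x (Matrix.toEuclideanLin A x)]
  congr 1
  ext i
  rw [← hsym (hA.eigenvectorBasis i) x, toEuclideanLin_basis hA i,
    real_inner_smul_left, real_inner_comm x]
  ring

lemma parseval_sq {A : Matrix n n ℝ} (hA : A.IsHermitian) (x : EuclideanSpace ℝ n) :
    ⟪x, x⟫ = ∑ i, ⟪hA.eigenvectorBasis i, x⟫ ^ 2 := by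
  rw [← (hA.eigenvectorBasis).sum_inner_mul_inner x x]
  congr 1
  ext i
  rw [real_inner_comm x]
  ring

lemma inner_single_toEuclideanLin (A : Matrix n n ℝ) (p q : n) :
    ⟪(EuclideanSpace.single p (1:ℝ)), Matrix.toEuclideanLin A (EuclideanSpace.single q (1:ℝ))⟫
      = A p q := by
  rw [inner_eq_dot]
  simp [Matrix.toEuclideanLin_apply, EuclideanSpace.single_apply, Matrix.mulVec,
    dotProduct]


lemma charpoly_conj_unitary {n : Type} [Fintype n] [DecidableEq n]
    (U : Matrix.unitaryGroup n ℝ) (D : Matrix n n ℝ) :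
    ((U : Matrix n n ℝ) * D * (star U : Matrix n n ℝ)).charpoly = D.charpoly := by
  have h1 : (U : Matrix n n ℝ) * (star U : Matrix n n ℝ) = 1 :=
    (Matrix.mem_unitaryGroup_iff).mp U.2
  have hmap : (U : Matrix n n ℝ).map (C : ℝ →+* ℝ[X]) * (star U : Matrix n n ℝ).map C = 1 := by
    rw [← Matrix.map_mul, h1, Matrix.map_one _ (map_zero _) (map_one _)]
  unfold Matrix.charpoly
  have : charmatrix ((U : Matrix n n ℝ) * D * (star U : Matrix n n ℝ)) =
      ((U : Matrix n n ℝ).map C) * charmatrix D * ((star U : Matrix n n ℝ).map C) := by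
    rw [charmatrix, charmatrix, mul_sub, sub_mul]
    congr 1
    · rw [(Matrix.scalar_commute (X : ℝ[X]) (Commute.all _) _).symm.eq, mul_assoc, hmap, mul_one]
    · simp only [RingHom.mapMatrix_apply, ← Matrix.map_mul]
  rw [this, det_mul, det_mul]
  have hdet : ((U : Matrix n n ℝ).map (C : ℝ →+* ℝ[X])).det *
      ((star U : Matrix n n ℝ).map (C : ℝ →+* ℝ[X])).det = 1 := by
    rw [← det_mul, hmap, det_one]
  ring_nf
  rw [mul_comm, ← mul_assoc]
  nth_rewrite 2 [mul_comm]
  rw [hdet, one_mul]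

lemma charpoly_diagonal {n : Type} [Fintype n] [DecidableEq n] (d : n → ℝ) :
    (Matrix.diagonal d).charpoly = ∏ i, (X - C (d i)) := by
  unfold Matrix.charpoly
  have : charmatrix (Matrix.diagonal d) = Matrix.diagonal fun i => (X : ℝ[X]) - C (d i) := by
    ext i j
    by_cases h : i = j
    · subst h; simp [charmatrix_apply_eq]
    · simp [charmatrix_apply_ne _ _ _ h, Matrix.diagonal_apply_ne _ h]
  rw [this, Matrix.det_diagonal]

lemma roots_charpoly_eq {n : Type} [Fintype n] [DecidableEq n]
    {A : Matrix n n ℝ} (hA : A.IsHermitian) :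
    A.charpoly.roots = Finset.univ.val.map hA.eigenvalues := by
  conv_lhs => rw [hA.spectral_theorem]
  rw [Unitary.conjStarAlgAut_apply, charpoly_conj_unitary, charpoly_diagonal]
  have : (∏ i, (X - C ((RCLike.ofReal ∘ hA.eigenvalues) i)) : ℝ[X]) =
      ((Finset.univ.val.map hA.eigenvalues).map fun a => X - C a).prod := by
    rw [Finset.prod, Multiset.map_map]
    congr 1
  rw [this, Polynomial.roots_multiset_prod_X_sub_C]

lemma second_le_one (A : Matrix n n ℝ) (hA : A.IsHermitian) (u v : n) (huv : u ≠ v)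
    (huu : A u u = 1) (hvv : A v v = 1) (huv0 : A u v = 0) (hvu0 : A v u = 0) :
    NLap.nthEig A 2 ≤ 1 := by
  by_contra hlt
  push_neg at hlt
  have hnt : Nontrivial n := ⟨u, v, huv⟩
  -- setup sorted list of roots
  have hroots : A.charpoly.roots = Finset.univ.val.map hA.eigenvalues := roots_charpoly_eq hA
  set l := A.charpoly.roots.sort (· ≤ ·) with hldef
  have hsorted : l.Pairwise (· ≤ ·) := A.charpoly.roots.pairwise_sort (· ≤ ·)
  have hcoe : (l : Multiset ℝ) = A.charpoly.roots := A.charpoly.roots.sort_eq (· ≤ ·)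
  have hlen : 2 ≤ l.length := by
    have : (l : Multiset ℝ).card = Fintype.card n := by
      rw [hcoe, hroots]; simp
    rw [Multiset.coe_card] at this
    rw [this]
    exact Fintype.one_lt_card
  have hcount : l.countP (fun x => decide (x ≤ 1)) ≤ 1 := by
    have h1 : 1 < l.getD 1 0 := hlt
    clear_value l
    clear hcoe hldef
    match l, hlen with
    | a :: b :: t, _ =>
      have h1b : (1:ℝ) < b := by simpa using h1
      rw [List.countP_cons, List.countP_eq_zero.2 ?_]
      · split <;> simp
      · intro x hx
        simp only [List.mem_cons] at hx
        have hbx : b ≤ x ∨ b = x := by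
          rcases hx with rfl | hx
          · exact Or.inr rfl
          · exact Or.inl ((List.pairwise_cons.1 (List.pairwise_cons.1 hsorted).2).1 x hx)
        have : 1 < x := by rcases hbx with h | rfl <;> linarith
        simpa using not_le.2 this
  -- at most one eigenvalue ≤ 1
  have hcard : (Finset.univ.filter fun i => hA.eigenvalues i ≤ 1).card ≤ 1 := by
    have : (Finset.univ.filter fun i => hA.eigenvalues i ≤ 1).card
        = l.countP (fun x => decide (x ≤ 1)) := by
      rw [← Multiset.coe_countP, hcoe, hroots, Multiset.countP_map]
      rfl
    rw [this]; exact hcount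
  set B := hA.eigenvectorBasis with hB
  set eu : EuclideanSpace ℝ n := EuclideanSpace.single u (1:ℝ) with heu
  set ev : EuclideanSpace ℝ n := EuclideanSpace.single v (1:ℝ) with hev
  -- find coefficients orthogonal to the (at most one) small eigenvector
  have hex : ∃ a b : ℝ, ¬(a = 0 ∧ b = 0) ∧
      ∀ i, hA.eigenvalues i ≤ 1 → a * ⟪B i, eu⟫ + b * ⟪B i, ev⟫ = 0 := by
    by_cases hS : ∃ i₀, hA.eigenvalues i₀ ≤ 1
    · obtain ⟨i₀, hi₀⟩ := hS
      have huniq : ∀ i, hA.eigenvalues i ≤ 1 → i = i₀ := by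
        intro i hi
        have := Finset.card_le_one.1 hcard i (by simp [hi]) i₀ (by simp [hi₀])
        exact this
      by_cases hz : ⟪B i₀, eu⟫ = 0 ∧ ⟪B i₀, ev⟫ = 0
      · exact ⟨1, 0, by simp, fun i hi => by rw [huniq i hi, hz.1, hz.2]; ring⟩
      · refine ⟨⟪B i₀, ev⟫, -⟪B i₀, eu⟫, ?_, fun i hi => by rw [huniq i hi]; ring⟩
        intro ⟨h1', h2'⟩
        exact hz ⟨by linarith [neg_eq_zero.1 h2'], h1'⟩
    · push_neg at hS
      exact ⟨1, 0, by simp, fun i hi => absurd hi (not_le.2 (hS i))⟩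
  obtain ⟨a, b, hab, hcons⟩ := hex
  set x : EuclideanSpace ℝ n := a • eu + b • ev with hx
  have hxc : ∀ i, ⟪B i, x⟫ = a * ⟪B i, eu⟫ + b * ⟪B i, ev⟫ := by
    intro i
    rw [hx, inner_add_right, real_inner_smul_right, real_inner_smul_right]
  have hxne : x ≠ 0 := by
    intro h0
    have hu' : x u = a := by
      simp [hx, heu, hev, EuclideanSpace.single_apply, huv, huv.symm]
    have hv' : x v = b := by
      simp [hx, heu, hev, EuclideanSpace.single_apply, huv, huv.symm]
    rw [h0] at hu' hv'
    exact hab ⟨hu'.symm, hv'.symm⟩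
  -- some coefficient is nonzero
  have hcne : ∃ i, ⟪B i, x⟫ ≠ 0 := by
    by_contra hall
    push_neg at hall
    apply hxne
    have : B.repr x = 0 := by
      ext i
      simpa [OrthonormalBasis.repr_apply_apply] using hall i
    simpa using congrArg B.repr.symm this
  obtain ⟨j, hj⟩ := hcne
  -- the quadratic form equals the norm squared on span{eu, ev}
  have hq : ⟪x, Matrix.toEuclideanLin A x⟫ = a^2 + b^2 := by
    rw [hx, map_add, _root_.map_smul, _root_.map_smul]
    simp only [inner_add_left, inner_add_right, real_inner_smul_left, real_inner_smul_right]
    rw [heu, hev, inner_single_toEuclideanLin, inner_single_toEuclideanLin,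
      inner_single_toEuclideanLin, inner_single_toEuclideanLin, huu, hvv, huv0, hvu0]
    ring
  have hnorm : ⟪x, x⟫ = a^2 + b^2 := by
    have h11 : ⟪eu, eu⟫ = 1 := by
      rw [heu, inner_eq_dot]; simp [EuclideanSpace.single_apply]
    have h22 : ⟪ev, ev⟫ = 1 := by
      rw [hev, inner_eq_dot]; simp [EuclideanSpace.single_apply]
    have h12 : ⟪eu, ev⟫ = 0 := by
      rw [heu, hev, inner_eq_dot]
      simp [EuclideanSpace.single_apply, huv, huv.symm]
    have h21 : ⟪ev, eu⟫ = 0 := by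
      rw [real_inner_comm]; exact h12
    rw [hx]
    simp only [inner_add_left, inner_add_right, real_inner_smul_left, real_inner_smul_right]
    rw [h11, h22, h12, h21]
    ring
  -- strict inequality from spectral decomposition
  have hstrict : ⟪x, x⟫ < ⟪x, Matrix.toEuclideanLin A x⟫ := by
    rw [quadform_spectral hA x, parseval_sq hA x]
    apply Finset.sum_lt_sum
    · intro i _
      by_cases hci : ⟪B i, x⟫ = 0
      · rw [hci]; simp
      · have hgt : 1 < hA.eigenvalues i := by
          by_contra hle
          push_neg at hle
          exact hci (by rw [hxc i]; exact hcons i hle)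
        nlinarith [sq_nonneg (⟪B i, x⟫), sq_pos_of_ne_zero hci]
    · refine ⟨j, Finset.mem_univ j, ?_⟩
      have hgt : 1 < hA.eigenvalues j := by
        by_contra hle
        push_neg at hle
        exact hj (by rw [hxc j]; exact hcons j hle)
      nlinarith [sq_pos_of_ne_zero hj]
  rw [hq, hnorm] at hstrict
  exact lt_irrefl _ hstrict


end Aux

/-- Lemma 2.4: for a connected graph which is not a complete graph, `λ₂(G) ≤ 1`. -/
theorem stmt4 {V : Type} [Fintype V] [DecidableEq V] (G : SimpleGraph V) [DecidableRel G.Adj]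
    (hG : G.Connected) (hnc : G ≠ ⊤) :
    lambda2 G ≤ 1 := by
  obtain ⟨u, v, huv, hnadj⟩ : ∃ u v : V, u ≠ v ∧ ¬G.Adj u v := by
    by_contra h
    push_neg at h
    apply hnc
    ext a b
    simp only [SimpleGraph.top_adj]
    exact ⟨SimpleGraph.Adj.ne, h a b⟩
  have hnt : Nontrivial V := ⟨u, v, huv⟩
  have hdeg : ∀ w : V, 0 < G.degree w := by
    intro w
    obtain ⟨w', hw'⟩ := exists_ne w
    obtain ⟨p⟩ := hG.preconnected w w'
    cases p with
    | nil => exact absurd rfl (Ne.symm hw')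
    | cons h q => exact (G.degree_pos_iff_exists_adj w).2 ⟨_, h⟩
  have hherm : (normLap G).IsHermitian := by
    have hL : (G.lapMatrix ℝ)ᵀ = G.lapMatrix ℝ := SimpleGraph.isSymm_lapMatrix ℝ G
    show (normLap G)ᴴ = normLap G
    rw [normLap, Matrix.conjTranspose_eq_transpose_of_trivial, Matrix.transpose_mul,
      Matrix.transpose_mul, Matrix.diagonal_transpose, hL, ← mul_assoc]
  have hentry : ∀ p q : V, normLap G p q =
      (Real.sqrt (G.degree p : ℝ))⁻¹ * (G.lapMatrix ℝ p q) * (Real.sqrt (G.degree q : ℝ))⁻¹ := by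
    intro p q
    rw [normLap, Matrix.mul_diagonal, Matrix.diagonal_mul]
  have hdiagentry : ∀ w : V, normLap G w w = 1 := by
    intro w
    rw [hentry]
    have hLww : G.lapMatrix ℝ w w = (G.degree w : ℝ) := by
      simp [SimpleGraph.lapMatrix, SimpleGraph.degMatrix]
    rw [hLww]
    have hd0 : (0:ℝ) < (G.degree w : ℝ) := by exact_mod_cast hdeg w
    have hs : Real.sqrt (G.degree w : ℝ) ≠ 0 := ne_of_gt (Real.sqrt_pos.2 hd0)
    field_simp
    rw [Real.sq_sqrt hd0.le]
  have hoffentry : ∀ p q : V, p ≠ q → ¬G.Adj p q → normLap G p q = 0 := by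
    intro p q hpq hna
    rw [hentry]
    have : G.lapMatrix ℝ p q = 0 := by
      simp [SimpleGraph.lapMatrix, SimpleGraph.degMatrix, Matrix.diagonal_apply_ne _ hpq, hna]
    rw [this]
    ring
  exact second_le_one (normLap G) hherm u v huv (hdiagentry u) (hdiagentry v)
    (hoffentry u v huv hnadj) (hoffentry v u huv.symm fun h => hnadj h.symm)

end NLap
end

section
/- Let G be a simple connected graph of order n with uv ∈ E(G), let G′ = G − uv + uw + wv be obtained by subdividing the edge uv, and let f be a harmonic eigenfunction associated with λ₂(G). If f(u)f(v) ≠ 0, then λ₂(G) > λ₂(G′) strictly. -/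
open Matrix Finset BigOperators

namespace NLap

variable {V : Type} [Fintype V] [DecidableEq V]

section Aux
open Polynomial
variable {n : Type} [Fintype n] [DecidableEq n]

lemma charpoly_roots_eig {M : Matrix n n ℝ} (hM : M.IsHermitian) :
    M.charpoly.roots = Multiset.map hM.eigenvalues Finset.univ.val := by
  classical
  set U : Matrix n n ℝ := (hM.eigenvectorUnitary : Matrix n n ℝ) with hUdef
  have hU1 : U * star U = 1 := (Matrix.mem_unitaryGroup_iff).mp hM.eigenvectorUnitary.2
  have hspec : M = U * Matrix.diagonal hM.eigenvalues * star U := by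
    have := hM.spectral_theorem
    simpa using this
  have hmapU : U.map C * (star U).map C = 1 := by
    rw [← Matrix.map_mul, hU1]
    simp [Matrix.map_one]
  have hscalar : ∀ A : Matrix n n ℝ[X], Matrix.scalar n (X : ℝ[X]) * A = A * Matrix.scalar n X := by
    intro A
    exact (Matrix.scalar_commute (X : ℝ[X]) (fun r' => Commute.all _ _) A).symm ▸ rfl
  have hcm : charmatrix M =
      U.map C * charmatrix (Matrix.diagonal hM.eigenvalues) * (star U).map C := by
    unfold charmatrix
    rw [Matrix.mul_sub, Matrix.sub_mul]
    congr 1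
    · rw [← hscalar, mul_assoc, hmapU, mul_one]
    · simp only [RingHom.mapMatrix_apply]
      conv_lhs => rw [hspec]
      rw [Matrix.map_mul, Matrix.map_mul]
  have hcp : M.charpoly = (Matrix.diagonal hM.eigenvalues).charpoly := by
    unfold Matrix.charpoly
    rw [hcm, Matrix.det_mul, Matrix.det_mul]
    have hdet : (U.map C).det * ((star U).map C).det = 1 := by
      rw [← Matrix.det_mul, hmapU, Matrix.det_one]
    linear_combination (norm := ring_nf) (Matrix.diagonal hM.eigenvalues).charmatrix.det * hdet
  rw [hcp]
  have hdiag : (Matrix.diagonal hM.eigenvalues).charpoly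
      = ((Multiset.map hM.eigenvalues Finset.univ.val).map (fun a => X - C a)).prod := by
    unfold Matrix.charpoly
    have : charmatrix (Matrix.diagonal hM.eigenvalues)
        = Matrix.diagonal (fun i => (X : ℝ[X]) - C (hM.eigenvalues i)) := by
      ext i j
      by_cases h : i = j
      · subst h; simp [charmatrix_apply_eq]
      · simp [charmatrix_apply_ne _ _ _ h, Matrix.diagonal_apply_ne _ h]
    rw [this, Matrix.det_diagonal, Multiset.map_map]
    rfl
  rw [hdiag, Polynomial.roots_multiset_prod_X_sub_C]

lemma rayleigh_aux (M : Matrix n n ℝ) (hM : M.PosSemidef) (φ x : n → ℝ)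
    (hφ : φ ≠ 0) (hMφ : M *ᵥ φ = 0) (hx : φ ⬝ᵥ x = 0) :
    nthEig M 2 * (x ⬝ᵥ x) ≤ x ⬝ᵥ (M *ᵥ x) := by
  classical
  have hH : M.IsHermitian := hM.1
  set μ : n → ℝ := hH.eigenvalues with hμdef
  set U : Matrix n n ℝ := (hH.eigenvectorUnitary : Matrix n n ℝ) with hUdef
  have hU1 : U * star U = 1 := (Matrix.mem_unitaryGroup_iff).mp hH.eigenvectorUnitary.2
  have hU2 : star U * U = 1 := (Matrix.mem_unitaryGroup_iff').mp hH.eigenvectorUnitary.2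
  have hspec : M = U * Matrix.diagonal μ * star U := by
    have := hH.spectral_theorem
    simpa using this
  set y : n → ℝ := (star U) *ᵥ x with hydef
  set z : n → ℝ := (star U) *ᵥ φ with hzdef
  have transfer : ∀ a b : n → ℝ, ((star U) *ᵥ a) ⬝ᵥ ((star U) *ᵥ b) = a ⬝ᵥ b := by
    intro a b
    have h1 : (star U) *ᵥ a = a ᵥ* U := by
      rw [Matrix.star_eq_conjTranspose, Matrix.conjTranspose_eq_transpose_of_trivial,
        Matrix.mulVec_transpose]
    rw [h1, ← Matrix.dotProduct_mulVec, Matrix.mulVec_mulVec, hU1, Matrix.one_mulVec]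
  have hxMx : x ⬝ᵥ (M *ᵥ x) = ∑ i, μ i * (y i) ^ 2 := by
    conv_lhs => rw [hspec]
    have h1 : (U * Matrix.diagonal μ * star U) *ᵥ x = U *ᵥ (Matrix.diagonal μ *ᵥ y) := by
      rw [hydef, Matrix.mulVec_mulVec, Matrix.mulVec_mulVec, Matrix.mul_assoc]
    rw [h1, Matrix.dotProduct_mulVec x U, ← Matrix.mulVec_transpose,
      ← Matrix.conjTranspose_eq_transpose_of_trivial, ← Matrix.star_eq_conjTranspose, ← hydef]
    simp only [dotProduct, Matrix.mulVec_diagonal]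
    congr 1; ext i; ring
  have hxx : x ⬝ᵥ x = ∑ i, (y i) ^ 2 := by
    rw [← transfer x x, ← hydef]
    simp only [dotProduct]; congr 1; ext i; ring
  have hzmul : ∀ i, μ i * z i = 0 := by
    have h1 : Matrix.diagonal μ *ᵥ z = 0 := by
      have h2 : Matrix.diagonal μ * star U = star U * M := by
        rw [hspec]
        rw [← Matrix.mul_assoc, ← Matrix.mul_assoc, hU2, Matrix.one_mul]
      rw [hzdef, Matrix.mulVec_mulVec, h2, ← Matrix.mulVec_mulVec, hMφ, Matrix.mulVec_zero]
    intro i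
    have := congrFun h1 i
    simpa [Matrix.mulVec_diagonal] using this
  have hzy : ∑ i, z i * y i = 0 := by
    have := transfer φ x
    rw [← hzdef, ← hydef] at this
    rw [← hx, ← this]; rfl
  have hz0 : z ≠ 0 := by
    intro h0
    apply hφ
    have : (U * star U) *ᵥ φ = U *ᵥ z := by rw [← Matrix.mulVec_mulVec, hzdef]
    rw [hU1, Matrix.one_mulVec] at this
    rw [this, h0, Matrix.mulVec_zero]
  have hμ0 : ∀ i, 0 ≤ μ i := fun i => hM.eigenvalues_nonneg i
  -- pass to sorted list
  have hroots : M.charpoly.roots = Multiset.map μ Finset.univ.val := charpoly_roots_eig hH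
  rcases le_or_gt (nthEig M 2) 0 with hle | hpos
  · have h1 : 0 ≤ x ⬝ᵥ x := by rw [hxx]; positivity
    have h2 : 0 ≤ x ⬝ᵥ (M *ᵥ x) := by
      rw [hxMx]
      apply Finset.sum_nonneg
      intro i _
      have := hμ0 i
      positivity
    nlinarith
  · set l : List ℝ := M.charpoly.roots.sort (· ≤ ·) with hldef
    have hsorted : List.Pairwise (· ≤ ·) l := Multiset.pairwise_sort _ _
    have hcoe : (l : Multiset ℝ) = Multiset.map μ Finset.univ.val := by
      rw [hldef, Multiset.sort_eq, hroots]
    have hlam : nthEig M 2 = l.getD 1 0 := rfl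
    have hlen2 : 2 ≤ l.length := by
      by_contra hc
      push_neg at hc
      have : l.getD 1 0 = 0 := List.getD_eq_default _ _ (by omega)
      rw [hlam, this] at hpos; exact lt_irrefl _ hpos
    match l, hsorted, hcoe, hlam, hlen2 with
    | a :: b :: tl, hsorted, hcoe, hlam, _ =>
    have hb : nthEig M 2 = b := hlam
    rw [hb] at hpos ⊢
    have hbtl : ∀ c ∈ tl, b ≤ c := fun c hc =>
      List.rel_of_pairwise_cons (List.pairwise_cons.mp hsorted).2 hc
    -- at most one index with μ i < b
    have hcard : (Finset.univ.filter (fun i => μ i < b)).card ≤ 1 := by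
      have h1 : (Multiset.map μ Finset.univ.val).countP (fun t => t < b) ≤ 1 := by
        rw [← hcoe, Multiset.coe_countP, List.countP_cons, List.countP_cons]
        have h2 : tl.countP (fun t => decide (t < b)) = 0 := by
          rw [List.countP_eq_zero]
          intro c hc
          simpa using not_lt.mpr (hbtl c hc)
        have hq : (decide (b < b)) = false := by simp
        rw [h2, hq]
        split_ifs <;> first | (exfalso; assumption) | omega
      rw [Multiset.countP_map] at h1
      exact h1
    have key : ∀ i j : n, μ i < b → μ j < b → i = j := by
      intro i j hi hj
      by_contra hne
      have : 2 ≤ (Finset.univ.filter (fun i => μ i < b)).card := by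
        apply Finset.one_lt_card.mpr
        exact ⟨i, by simp [hi], j, by simp [hj], hne⟩
      omega
    obtain ⟨i0, hi0⟩ : ∃ i, z i ≠ 0 := Function.ne_iff.mp hz0
    have hμi0 : μ i0 = 0 := by
      have := hzmul i0
      rcases mul_eq_zero.mp this with h | h
      · exact h
      · exact absurd h hi0
    have hi0lt : μ i0 < b := by rw [hμi0]; exact hpos
    have hge : ∀ i, i ≠ i0 → b ≤ μ i := by
      intro i hne
      by_contra hc
      exact hne (key i i0 (not_le.mp hc) hi0lt)
    have hzz : ∀ i, i ≠ i0 → z i = 0 := by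
      intro i hne
      have h1 := hzmul i
      rcases mul_eq_zero.mp h1 with h | h
      · exact absurd h (by have := hge i hne; intro hh; rw [hh] at this; linarith)
      · exact h
    have hy0 : y i0 = 0 := by
      have h1 : ∑ i, z i * y i = z i0 * y i0 := by
        apply Finset.sum_eq_single
        · intro i _ hne; rw [hzz i hne]; ring
        · intro h; exact absurd (Finset.mem_univ i0) h
      rw [h1] at hzy
      rcases mul_eq_zero.mp hzy with h | h
      · exact absurd h hi0
      · exact h
    rw [hxMx, hxx, Finset.mul_sum]
    apply Finset.sum_le_sum
    intro i _
    by_cases hne : i = i0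
    · subst hne; rw [hy0]; norm_num
    · have h1 := hge i hne
      have h2 : (0:ℝ) ≤ (y i)^2 := sq_nonneg _
      nlinarith

lemma nthEig_two_pos (M : Matrix n n ℝ) (hM : M.PosSemidef) (φ : n → ℝ) (hφ : φ ≠ 0)
    (hker : ∀ y : n → ℝ, M *ᵥ y = 0 → ∃ a : ℝ, y = a • φ)
    (hcard : 2 ≤ Fintype.card n) : 0 < nthEig M 2 := by
  classical
  have hH : M.IsHermitian := hM.1
  set μ : n → ℝ := hH.eigenvalues with hμdef
  have hroots : M.charpoly.roots = Multiset.map μ Finset.univ.val := charpoly_roots_eig hH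
  set l : List ℝ := M.charpoly.roots.sort (· ≤ ·) with hldef
  have hsorted : List.Pairwise (· ≤ ·) l := Multiset.pairwise_sort _ _
  have hcoe : (l : Multiset ℝ) = Multiset.map μ Finset.univ.val := by
    rw [hldef, Multiset.sort_eq, hroots]
  have hmem : ∀ t ∈ l, 0 ≤ t := by
    intro t ht
    have : t ∈ Multiset.map μ Finset.univ.val := by
      rw [← hcoe]; exact ht
    obtain ⟨i, _, rfl⟩ := Multiset.mem_map.mp this
    exact hM.eigenvalues_nonneg i
  have hlen : l.length = Fintype.card n := by
    have : Multiset.card (l : Multiset ℝ) = Fintype.card n := by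
      rw [hcoe, Multiset.card_map]; simp
    simpa using this
  have hlam : nthEig M 2 = l.getD 1 0 := rfl
  have hlen2 : 2 ≤ l.length := by omega
  match l, hsorted, hcoe, hmem, hlam, hlen2 with
  | a :: b :: tl, hsorted, hcoe, hmem, hlam, _ =>
  rw [hlam]
  show (0:ℝ) < b
  by_contra hc
  push_neg at hc
  have hb0 : b = 0 := le_antisymm hc (hmem b (by simp))
  have ha0 : a = 0 := by
    have h1 : a ≤ b := (List.pairwise_cons.mp hsorted).1 b (by simp)
    have h2 : 0 ≤ a := hmem a (by simp)
    linarith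
  -- the multiset of eigenvalues contains 0 at least twice
  have hcnt : 2 ≤ Multiset.count (0:ℝ) (Multiset.map μ Finset.univ.val) := by
    rw [← hcoe]
    have hcc : ((a :: b :: tl : List ℝ) : Multiset ℝ) = (0:ℝ) ::ₘ (0:ℝ) ::ₘ (tl : Multiset ℝ) := by
      rw [ha0, hb0]; rfl
    rw [hcc, Multiset.count_cons_self, Multiset.count_cons_self]
    omega
  have hfil : 2 ≤ (Finset.univ.filter (fun i => μ i = 0)).card := by
    rw [Multiset.count_map] at hcnt
    have heq : Finset.univ.val.filter (fun i => (0:ℝ) = μ i)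
        = Finset.univ.val.filter (fun i => μ i = 0) :=
      Multiset.filter_congr (fun i _ => by constructor <;> intro h <;> exact h.symm)
    rw [heq] at hcnt
    exact hcnt
  obtain ⟨i, hi, j, hj, hij⟩ := Finset.one_lt_card.mp hfil
  simp only [Finset.mem_filter] at hi hj
  have hvi : M *ᵥ ⇑(hH.eigenvectorBasis i) = 0 := by
    rw [hH.mulVec_eigenvectorBasis]
    rw [show hH.eigenvalues i = 0 from hi.2]
    simp
  have hvj : M *ᵥ ⇑(hH.eigenvectorBasis j) = 0 := by
    rw [hH.mulVec_eigenvectorBasis]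
    rw [show hH.eigenvalues j = 0 from hj.2]
    simp
  obtain ⟨c₁, hc₁⟩ := hker _ hvi
  obtain ⟨c₂, hc₂⟩ := hker _ hvj
  have horth := hH.eigenvectorBasis.orthonormal
  have hinner0 : (inner ℝ (hH.eigenvectorBasis i) (hH.eigenvectorBasis j) : ℝ) = 0 :=
    horth.2 hij
  have hinner1 : (inner ℝ (hH.eigenvectorBasis i) (hH.eigenvectorBasis i) : ℝ) = 1 := by
    rw [real_inner_self_eq_norm_sq, horth.1 i]; norm_num
  have hφφ : (0:ℝ) < ∑ k, φ k * φ k := by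
    have h1 : 0 ≤ ∑ k, φ k * φ k := Finset.sum_nonneg fun k _ => mul_self_nonneg _
    rcases h1.lt_or_eq with h | h
    · exact h
    · exfalso
      apply hφ
      funext k
      have := (Finset.sum_eq_zero_iff_of_nonneg (fun k _ => mul_self_nonneg (φ k))).mp h.symm
      have hk := this k (Finset.mem_univ k)
      show φ k = 0
      nlinarith [hk]
  have e0 : (inner ℝ (hH.eigenvectorBasis i) (hH.eigenvectorBasis j) : ℝ)
      = c₁ * c₂ * ∑ k, φ k * φ k := by
    rw [PiLp.inner_apply]
    simp only [RCLike.inner_apply, conj_trivial]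
    rw [Finset.mul_sum]
    apply Finset.sum_congr rfl
    intro k _
    have h1 : (hH.eigenvectorBasis i : n → ℝ) k = c₁ * φ k := congrFun hc₁ k
    have h2 : (hH.eigenvectorBasis j : n → ℝ) k = c₂ * φ k := congrFun hc₂ k
    rw [h1, h2]; ring
  have e1 : (inner ℝ (hH.eigenvectorBasis i) (hH.eigenvectorBasis i) : ℝ)
      = c₁ * c₁ * ∑ k, φ k * φ k := by
    rw [PiLp.inner_apply]
    simp only [RCLike.inner_apply, conj_trivial]
    rw [Finset.mul_sum]
    apply Finset.sum_congr rfl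
    intro k _
    have h1 : (hH.eigenvectorBasis i : n → ℝ) k = c₁ * φ k := congrFun hc₁ k
    rw [h1]; ring
  have e2 : (inner ℝ (hH.eigenvectorBasis j) (hH.eigenvectorBasis j) : ℝ)
      = c₂ * c₂ * ∑ k, φ k * φ k := by
    rw [PiLp.inner_apply]
    simp only [RCLike.inner_apply, conj_trivial]
    rw [Finset.mul_sum]
    apply Finset.sum_congr rfl
    intro k _
    have h2 : (hH.eigenvectorBasis j : n → ℝ) k = c₂ * φ k := congrFun hc₂ k
    rw [h2]; ring
  have hinner2 : (inner ℝ (hH.eigenvectorBasis j) (hH.eigenvectorBasis j) : ℝ) = 1 := by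
    rw [real_inner_self_eq_norm_sq, horth.1 j]; norm_num
  rw [e0] at hinner0
  rw [e1] at hinner1
  rw [e2] at hinner2
  nlinarith [hφφ, hinner0, hinner1, hinner2]

section GraphSide
variable (H : SimpleGraph n) [DecidableRel H.Adj]

lemma normLap_posSemidef : (normLap H).PosSemidef := by
  have h1 : normLap H = (Matrix.diagonal (fun v => (Real.sqrt (H.degree v : ℝ))⁻¹))ᴴ *
      H.lapMatrix ℝ * Matrix.diagonal (fun v => (Real.sqrt (H.degree v : ℝ))⁻¹) := by
    rw [Matrix.diagonal_conjTranspose]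
    rfl
  rw [h1]
  exact (SimpleGraph.posSemidef_lapMatrix ℝ H).conjTranspose_mul_mul_same _

lemma diag_inv_sqrt_mulVec (hd : ∀ w, 0 < (H.degree w : ℝ)) (g : n → ℝ) :
    Matrix.diagonal (fun v => (Real.sqrt (H.degree v : ℝ))⁻¹) *ᵥ
      (fun w => Real.sqrt (H.degree w : ℝ) * g w) = g := by
  funext w
  rw [Matrix.mulVec_diagonal]
  have : Real.sqrt (H.degree w : ℝ) ≠ 0 := ne_of_gt (Real.sqrt_pos.mpr (hd w))
  field_simp

lemma dot_diag_left (s : n → ℝ) (a b : n → ℝ) :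
    a ⬝ᵥ (Matrix.diagonal s *ᵥ b) = (Matrix.diagonal s *ᵥ a) ⬝ᵥ b := by
  simp only [dotProduct, Matrix.mulVec_diagonal]
  exact Finset.sum_congr rfl fun i _ => by ring

lemma normLap_quadform (hd : ∀ w, 0 < (H.degree w : ℝ)) (g : n → ℝ) :
    (fun w => Real.sqrt (H.degree w : ℝ) * g w) ⬝ᵥ
      (normLap H *ᵥ (fun w => Real.sqrt (H.degree w : ℝ) * g w))
      = g ⬝ᵥ (H.lapMatrix ℝ *ᵥ g) := by
  set x : n → ℝ := fun w => Real.sqrt (H.degree w : ℝ) * g w with hx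
  have h1 : normLap H *ᵥ x = Matrix.diagonal (fun v => (Real.sqrt (H.degree v : ℝ))⁻¹) *ᵥ
      (H.lapMatrix ℝ *ᵥ g) := by
    rw [normLap, ← Matrix.mulVec_mulVec, ← Matrix.mulVec_mulVec, diag_inv_sqrt_mulVec H hd]
  rw [h1, dot_diag_left, diag_inv_sqrt_mulVec H hd]

lemma normLap_dot_self (hd : ∀ w, 0 < (H.degree w : ℝ)) (g : n → ℝ) :
    (fun w => Real.sqrt (H.degree w : ℝ) * g w) ⬝ᵥ (fun w => Real.sqrt (H.degree w : ℝ) * g w)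
      = ∑ w, (H.degree w : ℝ) * g w ^ 2 := by
  simp only [dotProduct]
  apply Finset.sum_congr rfl
  intro w _
  have h1 : Real.sqrt (H.degree w : ℝ) * Real.sqrt (H.degree w : ℝ) = (H.degree w : ℝ) :=
    Real.mul_self_sqrt (le_of_lt (hd w))
  linear_combination (g w ^ 2) * h1

lemma normLap_phi_ker (hd : ∀ w, 0 < (H.degree w : ℝ)) :
    normLap H *ᵥ (fun w => Real.sqrt (H.degree w : ℝ)) = 0 := by
  have h1 : Matrix.diagonal (fun v => (Real.sqrt (H.degree v : ℝ))⁻¹) *ᵥ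
      (fun w => Real.sqrt (H.degree w : ℝ)) = fun _ => 1 := by
    funext w
    rw [Matrix.mulVec_diagonal]
    have : Real.sqrt (H.degree w : ℝ) ≠ 0 := ne_of_gt (Real.sqrt_pos.mpr (hd w))
    field_simp
  rw [normLap, ← Matrix.mulVec_mulVec, ← Matrix.mulVec_mulVec, h1,
    SimpleGraph.lapMatrix_mulVec_const_eq_zero, Matrix.mulVec_zero]

lemma normLap_phi_dot (hd : ∀ w, 0 < (H.degree w : ℝ)) (g : n → ℝ) :
    (fun w => Real.sqrt (H.degree w : ℝ)) ⬝ᵥ (fun w => Real.sqrt (H.degree w : ℝ) * g w)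
      = ∑ w, (H.degree w : ℝ) * g w := by
  simp only [dotProduct]
  apply Finset.sum_congr rfl
  intro w _
  have h1 : Real.sqrt (H.degree w : ℝ) * Real.sqrt (H.degree w : ℝ) = (H.degree w : ℝ) :=
    Real.mul_self_sqrt (le_of_lt (hd w))
  linear_combination (g w) * h1

lemma normLap_phi_ne [Nonempty n] (hd : ∀ w, 0 < (H.degree w : ℝ)) :
    (fun w => Real.sqrt (H.degree w : ℝ)) ≠ (0 : n → ℝ) := by
  intro h
  obtain ⟨w⟩ := ‹Nonempty n›
  have := congrFun h w
  have h2 : Real.sqrt (H.degree w : ℝ) > 0 := Real.sqrt_pos.mpr (hd w)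
  simp only [Pi.zero_apply] at this
  linarith

lemma normLap_ker (hd : ∀ w, 0 < (H.degree w : ℝ)) (hG : H.Connected) :
    ∀ y : n → ℝ, normLap H *ᵥ y = 0 →
      ∃ α : ℝ, y = α • (fun w => Real.sqrt (H.degree w : ℝ)) := by
  intro y hy
  set g : n → ℝ := fun w => (Real.sqrt (H.degree w : ℝ))⁻¹ * y w with hgdef
  have hxy : (fun w => Real.sqrt (H.degree w : ℝ) * g w) = y := by
    funext w
    have : Real.sqrt (H.degree w : ℝ) ≠ 0 := ne_of_gt (Real.sqrt_pos.mpr (hd w))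
    simp only [hgdef]
    field_simp
  have h0 : g ⬝ᵥ (H.lapMatrix ℝ *ᵥ g) = 0 := by
    rw [← normLap_quadform H hd g, hxy, hy, dotProduct_zero]
  have hconst : ∀ i j : n, H.Reachable i j → g i = g j := by
    have := (SimpleGraph.lapMatrix_toLinearMap₂'_apply'_eq_zero_iff_forall_reachable H g).mp
    apply this
    rw [Matrix.toLinearMap₂'_apply']
    exact h0
  obtain ⟨w₀⟩ := hG.nonempty
  refine ⟨g w₀, ?_⟩
  rw [← hxy]
  funext w
  have : g w = g w₀ := hconst w w₀ (hG.preconnected w w₀)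
  simp [this]
  ring

end GraphSide

lemma degree_pos_of_connected (H : SimpleGraph n) [DecidableRel H.Adj] (hG : H.Connected)
    (hcard : 2 ≤ Fintype.card n) (w : n) : 0 < (H.degree w : ℝ) := by
  have h1 : 1 < Fintype.card n := by omega
  obtain ⟨w', hw'⟩ := Fintype.exists_ne_of_one_lt_card h1 w
  have hr : H.Reachable w w' := hG.preconnected w w'
  obtain ⟨p⟩ := hr
  have : ∃ y, H.Adj w y := by
    cases p with
    | nil => exact absurd rfl hw'.symm
    | cons h _ => exact ⟨_, h⟩
  have h2 : 0 < H.degree w := (SimpleGraph.degree_pos_iff_exists_adj H w).mpr this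
  exact_mod_cast h2

lemma ite_decomp (A P Q : Prop) [Decidable A] [Decidable P] [Decidable Q]
    (hPA : P → A) (hQA : Q → A) (hPQ : ¬(P ∧ Q)) (X : ℝ) :
    (if A ∧ ¬P ∧ ¬Q then X else 0)
      = (if A then X else 0) - (if P then X else 0) - (if Q then X else 0) := by
  by_cases hP : P <;> by_cases hQ : Q <;> by_cases hA : A <;> simp_all

lemma ite_or_decomp (P Q : Prop) [Decidable P] [Decidable Q] (hPQ : ¬(P ∧ Q)) (X : ℝ) :
    (if P ∨ Q then X else 0) = (if P then X else 0) + (if Q then X else 0) := by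
  by_cases hP : P <;> by_cases hQ : Q <;> simp_all

section Subdiv
variable (G : SimpleGraph n) [DecidableRel G.Adj] (u v : n)

lemma row_sum_subdiv_inl (huv : G.Adj u v) (a : n) (W : (n ⊕ Unit) → ℝ) :
    ∑ y : n ⊕ Unit, (if (subdivide G u v).Adj (Sum.inl a) y then W y else 0)
      = (∑ b, if G.Adj a b then W (Sum.inl b) else 0)
        - (if a = u then W (Sum.inl v) else 0) - (if a = v then W (Sum.inl u) else 0)
        + (if a = u ∨ a = v then W (Sum.inr ()) else 0) := by
  rw [Fintype.sum_sum_type]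
  have h1 : ∀ b : n, (if (subdivide G u v).Adj (Sum.inl a) (Sum.inl b) then W (Sum.inl b) else 0)
      = (if G.Adj a b then W (Sum.inl b) else 0)
        - (if a = u ∧ b = v then W (Sum.inl b) else 0)
        - (if a = v ∧ b = u then W (Sum.inl b) else 0) := by
    intro b
    have : (subdivide G u v).Adj (Sum.inl a) (Sum.inl b)
        ↔ (G.Adj a b ∧ ¬(a = u ∧ b = v) ∧ ¬(a = v ∧ b = u)) := Iff.rfl
    rw [if_congr this rfl rfl]
    apply ite_decomp
    · rintro ⟨rfl, rfl⟩; exact huv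
    · rintro ⟨rfl, rfl⟩; exact huv.symm
    · rintro ⟨⟨rfl, rfl⟩, h, _⟩; exact huv.ne h
  have h2 : ∑ b : n, (if (subdivide G u v).Adj (Sum.inl a) (Sum.inl b) then W (Sum.inl b) else 0)
      = (∑ b, if G.Adj a b then W (Sum.inl b) else 0)
        - (if a = u then W (Sum.inl v) else 0) - (if a = v then W (Sum.inl u) else 0) := by
    simp only [h1, Finset.sum_sub_distrib]
    congr 1
    · congr 1
      by_cases ha : a = u
      · simp [ha, Finset.sum_ite_eq']
      · simp [ha]
    · by_cases ha : a = v
      · simp [ha, Finset.sum_ite_eq']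
      · simp [ha]
  rw [h2]
  have h3 : ∑ t : Unit, (if (subdivide G u v).Adj (Sum.inl a) (Sum.inr t) then W (Sum.inr t) else 0)
      = (if a = u ∨ a = v then W (Sum.inr ()) else 0) := by
    have : ∀ t : Unit, (subdivide G u v).Adj (Sum.inl a) (Sum.inr t) ↔ (a = u ∨ a = v) :=
      fun t => Iff.rfl
    simp only [if_congr (this _) rfl rfl]
    exact Fintype.sum_unique _
  rw [h3]

lemma row_sum_subdiv_inr (huv : G.Adj u v) (W : (n ⊕ Unit) → ℝ) :
    ∑ y : n ⊕ Unit, (if (subdivide G u v).Adj (Sum.inr ()) y then W y else 0)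
      = W (Sum.inl u) + W (Sum.inl v) := by
  rw [Fintype.sum_sum_type]
  have h1 : ∑ b : n, (if (subdivide G u v).Adj (Sum.inr ()) (Sum.inl b) then W (Sum.inl b) else 0)
      = W (Sum.inl u) + W (Sum.inl v) := by
    have : ∀ b : n, (subdivide G u v).Adj (Sum.inr ()) (Sum.inl b) ↔ (b = u ∨ b = v) :=
      fun b => Iff.rfl
    simp only [if_congr (this _) rfl rfl]
    have h2 : ∀ b : n, (if b = u ∨ b = v then W (Sum.inl b) else 0)
        = (if b = u then W (Sum.inl b) else 0) + (if b = v then W (Sum.inl b) else 0) := by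
      intro b
      apply ite_or_decomp
      rintro ⟨rfl, rfl⟩; exact huv.ne rfl
    simp only [h2, Finset.sum_add_distrib]
    rw [Finset.sum_ite_eq' Finset.univ u, Finset.sum_ite_eq' Finset.univ v]
    simp
  rw [h1]
  have h3 : ∑ t : Unit, (if (subdivide G u v).Adj (Sum.inr ()) (Sum.inr t) then W (Sum.inr t) else 0) = 0 := by
    simp [show ∀ t : Unit, ¬ (subdivide G u v).Adj (Sum.inr ()) (Sum.inr t) from fun t h => h]
  rw [h3, add_zero]

lemma deg_subdiv_inl (huv : G.Adj u v) (a : n) :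
    (((subdivide G u v).degree (Sum.inl a) : ℝ)) = (G.degree a : ℝ) := by
  rw [SimpleGraph.degree_eq_sum_if_adj, SimpleGraph.degree_eq_sum_if_adj]
  rw [row_sum_subdiv_inl G u v huv a (fun _ => (1:ℝ))]
  rw [ite_or_decomp _ _ (by rintro ⟨rfl, rfl⟩; exact huv.ne rfl)]
  ring

lemma deg_subdiv_inr (huv : G.Adj u v) :
    (((subdivide G u v).degree (Sum.inr ()) : ℝ)) = 2 := by
  rw [SimpleGraph.degree_eq_sum_if_adj]
  rw [row_sum_subdiv_inr G u v huv (fun _ => (1:ℝ))]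
  norm_num

end Subdiv

theorem main' (G : SimpleGraph n) [DecidableRel G.Adj]
    (hG : G.Connected) (u v : n) (huv : G.Adj u v) (f : n → ℝ)
    (lam : ℝ) (hlam : lam = nthEig (normLap G) 2)
    (hf1 : f ≠ 0) (hf2 : G.lapMatrix ℝ *ᵥ f = fun w => lam * ((G.degree w : ℝ) * f w))
    (hfuv : f u * f v ≠ 0) :
    nthEig (normLap (subdivide G u v)) 2 < lam := by
  classical
  have hneuv : u ≠ v := huv.ne
  have hcard : 2 ≤ Fintype.card n := by
    have : 1 < Fintype.card n := Fintype.one_lt_card_iff.mpr ⟨u, v, hneuv⟩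
    omega
  have hdG : ∀ w, 0 < (G.degree w : ℝ) := degree_pos_of_connected G hG hcard
  haveI : Nonempty n := ⟨u⟩
  -- λ > 0
  have hlampos : 0 < lam := by
    rw [hlam]
    exact nthEig_two_pos (normLap G) (normLap_posSemidef G) _
      (normLap_phi_ne G hdG) (normLap_ker G hdG hG) hcard
  -- ∑ d f = 0
  have hsum0 : ∑ w, (G.degree w : ℝ) * f w = 0 := by
    have h1 : (fun _ => (1:ℝ)) ⬝ᵥ (G.lapMatrix ℝ *ᵥ f) = 0 := by
      rw [Matrix.dotProduct_mulVec]
      have h2 : (fun _ => (1:ℝ)) ᵥ* (G.lapMatrix ℝ) = 0 := by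
        have h3 : (fun _ => (1:ℝ)) ᵥ* (G.lapMatrix ℝ)
            = (G.lapMatrix ℝ)ᵀ *ᵥ (fun _ => (1:ℝ)) := by
          rw [Matrix.mulVec_transpose]
        rw [h3, (SimpleGraph.isSymm_lapMatrix ℝ G).eq, SimpleGraph.lapMatrix_mulVec_const_eq_zero]
      rw [h2, zero_dotProduct]
    rw [hf2] at h1
    simp only [dotProduct, one_mul] at h1
    have h4 : ∑ w, lam * ((G.degree w : ℝ) * f w) = lam * ∑ w, (G.degree w : ℝ) * f w := by
      rw [Finset.mul_sum]
    rw [h4] at h1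
    rcases mul_eq_zero.mp h1 with h | h
    · exact absurd h (ne_of_gt hlampos)
    · exact h
  -- Rayleigh value of f
  set Df : ℝ := ∑ w, (G.degree w : ℝ) * f w ^ 2 with hDf
  have hQf : f ⬝ᵥ (G.lapMatrix ℝ *ᵥ f) = lam * Df := by
    rw [hf2]
    simp only [dotProduct, hDf]
    rw [Finset.mul_sum]
    apply Finset.sum_congr rfl
    intro w _
    ring
  set volG : ℝ := ∑ w, (G.degree w : ℝ) with hvolG
  set vol' : ℝ := volG + 2 with hvol'
  have hd1 : ∀ w, 1 ≤ (G.degree w : ℝ) := by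
    intro w
    have := hdG w
    have h2 : (0:ℕ) < G.degree w := by exact_mod_cast this
    exact_mod_cast h2
  have hvolG2 : 2 ≤ volG := by
    have h1 : ({u, v} : Finset n) ⊆ Finset.univ := Finset.subset_univ _
    have h2 : ∑ w ∈ ({u, v} : Finset n), (G.degree w : ℝ) ≤ volG :=
      Finset.sum_le_sum_of_subset_of_nonneg h1 (fun i _ _ => le_of_lt (hdG i))
    rw [Finset.sum_pair hneuv] at h2
    have := hd1 u; have := hd1 v
    linarith
  have hvol4 : 4 ≤ vol' := by rw [hvol']; linarith
  have hvolne : vol' ≠ 0 := by linarith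
  -- choose c
  set s : ℝ := f u + f v with hs
  set p : ℝ := f u * f v with hp
  set A : ℝ := 2 - 2*lam*(1 - 2/vol') with hA
  clear_value s p A
  obtain ⟨c, hc⟩ : ∃ c : ℝ, A*c^2 - 2*s*c + 2*p < 0 := by
    rcases lt_or_gt_of_ne hfuv with hneg | hpos
    · refine ⟨0, ?_⟩
      have : A*0^2 - 2*s*0 + 2*p = 2*p := by ring
      rw [this]
      linarith
    · have hsne : s ≠ 0 := by
        intro h0
        have h0' : f u + f v = 0 := by rw [← hs]; exact h0
        have hv : f v = - f u := by linarith
        have hpneg : p = -(f u * f u) := by rw [hp, hv]; ring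
        nlinarith [mul_self_nonneg (f u)]
      have hfrac : 2/vol' ≤ 1/2 := by
        rw [div_le_div_iff₀ (by linarith) (by norm_num)]
        linarith
      have hfracpos : 0 < 1 - 2/vol' := by linarith
      have hdisc : 2*A*p < s^2 := by
        have h1 : s^2 - 2*A*p = (f u - f v)^2 + 4*lam*p*(1 - 2/vol') := by
          rw [hA, hs, hp]; ring
        linarith [h1, sq_nonneg (f u - f v), mul_pos (mul_pos hlampos hpos) hfracpos]
      rcases le_or_gt A 0 with hA0 | hA0
      · refine ⟨(p/s^2 + 1)*s, ?_⟩
        have hs2 : 0 < s^2 := by positivity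
        have h1 : 2*s*((p/s^2 + 1)*s) = 2*p + 2*s^2 := by field_simp
        nlinarith [mul_nonpos_of_nonpos_of_nonneg hA0 (sq_nonneg ((p/s^2 + 1)*s))]
      · refine ⟨s/A, ?_⟩
        have h1 : A*(s/A)^2 - 2*s*(s/A) + 2*p = 2*p - s^2/A := by field_simp; ring
        rw [h1]
        have h2 : 2*p < s^2/A := by rw [lt_div_iff₀ hA0]; nlinarith
        linarith
  -- the test function on the subdivided graph
  set t : ℝ := 2*c/vol' with ht
  set g : (n ⊕ Unit) → ℝ := fun w => Sum.elim f (fun _ => c) w - t with hg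
  have hginl : ∀ a : n, g (Sum.inl a) = f a - t := fun a => rfl
  have hginr : g (Sum.inr ()) = c - t := rfl
  set G' := subdivide G u v with hG'
  have dInl : ∀ a : n, ((G'.degree (Sum.inl a) : ℝ)) = (G.degree a : ℝ) :=
    fun a => deg_subdiv_inl G u v huv a
  have dInr : ((G'.degree (Sum.inr ()) : ℝ)) = 2 := deg_subdiv_inr G u v huv
  have hd' : ∀ w, 0 < (G'.degree w : ℝ) := by
    rintro (a | t)
    · rw [dInl]; exact hdG a
    · cases t; rw [dInr]; norm_num
  -- orthogonality
  have horth : ∑ w, (G'.degree w : ℝ) * g w = 0 := by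
    rw [Fintype.sum_sum_type]
    have h1 : ∑ a : n, (G'.degree (Sum.inl a) : ℝ) * g (Sum.inl a)
        = ∑ a : n, (G.degree a : ℝ) * (f a - t) := by
      apply Finset.sum_congr rfl
      intro a _
      rw [dInl, hginl]
    have h2 : ∑ x : Unit, (G'.degree (Sum.inr x) : ℝ) * g (Sum.inr x) = 2 * (c - t) := by
      rw [Fintype.sum_unique]
      rw [dInr, hginr]
    rw [h1, h2]
    have h3 : ∑ a : n, (G.degree a : ℝ) * (f a - t)
        = (∑ a, (G.degree a : ℝ) * f a) - t * volG := by
      rw [hvolG, Finset.mul_sum, ← Finset.sum_sub_distrib]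
      apply Finset.sum_congr rfl
      intro a _; ring
    rw [h3, hsum0]
    have h4 : t * vol' = 2 * c := by rw [ht]; field_simp
    rw [hvol'] at h4
    linarith
  -- denominator
  set den : ℝ := ∑ w, (G'.degree w : ℝ) * g w ^ 2 with hden
  have hdenval : den = Df + t^2*volG + 2*(c - t)^2 := by
    rw [hden, Fintype.sum_sum_type]
    have h1 : ∑ a : n, (G'.degree (Sum.inl a) : ℝ) * g (Sum.inl a) ^ 2
        = ∑ a : n, (G.degree a : ℝ) * (f a - t) ^ 2 := by
      apply Finset.sum_congr rfl
      intro a _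
      rw [dInl, hginl]
    have h2 : ∑ x : Unit, (G'.degree (Sum.inr x) : ℝ) * g (Sum.inr x) ^ 2 = 2 * (c - t)^2 := by
      rw [Fintype.sum_unique, dInr, hginr]
    rw [h1, h2]
    have h3 : ∑ a : n, (G.degree a : ℝ) * (f a - t) ^ 2
        = Df - 2*t*(∑ a, (G.degree a : ℝ) * f a) + t^2*volG := by
      rw [hDf, hvolG, Finset.mul_sum, Finset.mul_sum, ← Finset.sum_sub_distrib,
        ← Finset.sum_add_distrib]
      apply Finset.sum_congr rfl
      intro a _; ring
    rw [h3, hsum0]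
    ring
  -- numerator
  set num : ℝ := g ⬝ᵥ (G'.lapMatrix ℝ *ᵥ g) with hnum
  have hQG : (∑ a, ∑ b, if G.Adj a b then (f a - f b)^2 else 0) = 2 * (lam * Df) := by
    have h1 := SimpleGraph.lapMatrix_toLinearMap₂' (R := ℝ) G f
    rw [Matrix.toLinearMap₂'_apply'] at h1
    rw [hQf] at h1
    linarith
  have hnumval : num = lam * Df + ((f u - c)^2 + (f v - c)^2 - (f u - f v)^2) := by
    have h1 := SimpleGraph.lapMatrix_toLinearMap₂' (R := ℝ) G' g
    rw [Matrix.toLinearMap₂'_apply'] at h1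
    rw [hnum, h1]
    have h2 : ∑ x : n ⊕ Unit, ∑ y : n ⊕ Unit, (if G'.Adj x y then (g x - g y)^2 else 0)
        = (∑ a, ∑ b, if G.Adj a b then (f a - f b)^2 else 0)
          - 2*(f u - f v)^2 + 2*((f u - c)^2 + (f v - c)^2) := by
      rw [Fintype.sum_sum_type]
      have hrow : ∀ a : n, ∑ y : n ⊕ Unit, (if G'.Adj (Sum.inl a) y then (g (Sum.inl a) - g y)^2 else 0)
          = (∑ b, if G.Adj a b then (f a - f b)^2 else 0)
            - (if a = u then (f a - f v)^2 else 0) - (if a = v then (f a - f u)^2 else 0)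
            + ((if a = u then (f a - c)^2 else 0) + (if a = v then (f a - c)^2 else 0)) := by
        intro a
        rw [row_sum_subdiv_inl G u v huv a (fun y => (g (Sum.inl a) - g y)^2)]
        rw [ite_or_decomp _ _ (by rintro ⟨rfl, rfl⟩; exact hneuv rfl)]
        have e1 : ∀ b : n, g (Sum.inl a) - g (Sum.inl b) = f a - f b := by
          intro b; rw [hginl, hginl]; ring
        have e2 : g (Sum.inl a) - g (Sum.inr ()) = f a - c := by
          rw [hginl, hginr]; ring
        simp only [e1, e2]
      have hrows : ∑ a : n, ∑ y : n ⊕ Unit, (if G'.Adj (Sum.inl a) y then (g (Sum.inl a) - g y)^2 else 0)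
          = (∑ a, ∑ b, if G.Adj a b then (f a - f b)^2 else 0)
            - (f u - f v)^2 - (f v - f u)^2 + ((f u - c)^2 + (f v - c)^2) := by
        simp only [hrow, Finset.sum_add_distrib, Finset.sum_sub_distrib]
        rw [Finset.sum_ite_eq' Finset.univ u (fun a => (f a - f v)^2),
          Finset.sum_ite_eq' Finset.univ v (fun a => (f a - f u)^2),
          Finset.sum_ite_eq' Finset.univ u (fun a => (f a - c)^2),
          Finset.sum_ite_eq' Finset.univ v (fun a => (f a - c)^2)]
        simp only [Finset.mem_univ, if_true]
      have hrow2 : ∑ x : Unit, ∑ y : n ⊕ Unit, (if G'.Adj (Sum.inr x) y then (g (Sum.inr x) - g y)^2 else 0)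
          = (c - f u)^2 + (c - f v)^2 := by
        rw [Fintype.sum_unique]
        rw [row_sum_subdiv_inr G u v huv (fun y => (g (Sum.inr ()) - g y)^2)]
        rw [hginr, hginl, hginl]
        ring_nf
      rw [hrows, hrow2]
      ring
    rw [h2, hQG]
    ring
  -- strict comparison of numerator and λ·denominator
  have hkey : num < lam * den := by
    have h1 : lam * den - num = -(A*c^2 - 2*s*c + 2*p) := by
      rw [hdenval, hnumval, hA, hs, hp, ht]
      field_simp
      ring
    linarith
  have hnumnonneg : 0 ≤ num := by
    have h1 := SimpleGraph.lapMatrix_toLinearMap₂' (R := ℝ) G' g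
    rw [Matrix.toLinearMap₂'_apply'] at h1
    rw [hnum, h1]
    have h5 : ∀ x : n ⊕ Unit, 0 ≤ ∑ y, (if G'.Adj x y then (g x - g y)^2 else 0) := by
      intro x
      apply Finset.sum_nonneg
      intro y _
      split_ifs
      · positivity
      · exact le_refl _
    have h6 : 0 ≤ ∑ x : n ⊕ Unit, ∑ y, (if G'.Adj x y then (g x - g y)^2 else 0) :=
      Finset.sum_nonneg (fun x _ => h5 x)
    linarith
  have hdennonneg : 0 ≤ den := by
    rw [hden]
    apply Finset.sum_nonneg
    intro w _
    have := hd' w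
    positivity
  have hdenpos : 0 < den := by
    rcases hdennonneg.lt_or_eq with h | h
    · exact h
    · exfalso
      rw [← h] at hkey
      rw [mul_zero] at hkey
      linarith
  -- apply the Rayleigh bound on the subdivided graph
  have hray := rayleigh_aux (normLap G') (normLap_posSemidef G')
    (fun w => Real.sqrt (G'.degree w : ℝ)) (fun w => Real.sqrt (G'.degree w : ℝ) * g w)
    (normLap_phi_ne G' hd') (normLap_phi_ker G' hd')
    (by rw [normLap_phi_dot G' hd' g]; exact horth)
  rw [normLap_quadform G' hd' g, normLap_dot_self G' hd' g] at hray
  rw [← hnum, ← hden] at hray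
  have : nthEig (normLap G') 2 * den < lam * den := lt_of_le_of_lt hray hkey
  exact lt_of_mul_lt_mul_right this hdenpos.le

end Aux

/-- Theorem 3.1 (second part): if `f` is a harmonic eigenfunction associated with `λ₂(G)`
and `f(u)f(v) ≠ 0`, then `λ₂(G) > λ₂(G')` where `G' = G - uv + uw + wv`. -/
theorem stmt8 {V : Type} [Fintype V] [DecidableEq V] (G : SimpleGraph V) [DecidableRel G.Adj]
    (hG : G.Connected) (u v : V) (huv : G.Adj u v) (f : V → ℝ)
    (hf : IsHarmonic G (lambda2 G) f) (hfuv : f u * f v ≠ 0) :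
    lambda2 (subdivide G u v) < lambda2 G := by
  obtain ⟨hf1, hf2⟩ := hf
  exact main' G hG u v huv f (lambda2 G) rfl hf1 hf2 hfuv

end NLap
end

section
/- Let G be a simple connected graph of order n with uv ∈ E(G), let G′ = G − uv + uw + wv be obtained by subdividing the edge uv, and let f be a harmonic eigenfunction associated with the normalized Laplacian spectral radius ρ(𝓛(G)). If f(u)f(v) ≥ 0, then ρ(𝓛(G)) ≤ ρ(𝓛(G′)); moreover, if f(u)f(v) > 0, then ρ(𝓛(G)) < ρ(𝓛(G′)) strictly. -/
open Matrix Finset BigOperators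

namespace NLap

variable {V : Type} [Fintype V] [DecidableEq V]

section Aux

open Polynomial

variable {V : Type} [Fintype V] [DecidableEq V]

lemma mapC_det (P : Matrix V V ℝ) : (P.map C).det = C P.det := by
  rw [RingHom.map_det]; rfl

lemma charpoly_conj (P A Pinv : Matrix V V ℝ) (h1 : P * Pinv = 1) :
    (P * A * Pinv).charpoly = A.charpoly := by
  have hcomm : ∀ M : Matrix V V ℝ[X], M * Matrix.scalar V (X : ℝ[X]) =
      Matrix.scalar V (X : ℝ[X]) * M :=
    fun M => ((scalar_commute (X : ℝ[X]) (fun r => Commute.all _ _) M)).symm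
  have key : P.map C * charmatrix A * Pinv.map C = charmatrix (P * A * Pinv) := by
    unfold charmatrix
    simp only [RingHom.mapMatrix_apply]
    rw [mul_sub, sub_mul, hcomm (P.map C), mul_assoc, ← Matrix.map_mul, h1,
      ← Matrix.map_mul, ← Matrix.map_mul]
    simp
  have hdet : P.det * Pinv.det = 1 := by rw [← det_mul, h1, det_one]
  unfold Matrix.charpoly
  rw [← key, det_mul, det_mul, mapC_det, mapC_det]
  have h2 : C P.det * (charmatrix A).det * C Pinv.det
      = C (P.det * Pinv.det) * (charmatrix A).det := by rw [C_mul]; ring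
  rw [h2, hdet]
  simp

lemma charpoly_diag (d : V → ℝ) :
    (Matrix.diagonal d).charpoly = ∏ i, (X - C (d i)) := by
  unfold Matrix.charpoly
  have h : charmatrix (Matrix.diagonal d) = Matrix.diagonal (fun i => X - C (d i)) := by
    ext i j
    by_cases h : i = j
    · subst h; simp
    · simp [h, charmatrix_apply_ne _ _ _ h, Matrix.diagonal_apply_ne _ h]
  rw [h, det_diagonal]

lemma roots_charpoly_herm (A : Matrix V V ℝ) (hA : A.IsHermitian) :
    A.charpoly.roots = Finset.univ.val.map hA.eigenvalues := by
  have hU := hA.spectral_theorem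
  have h1 : (hA.eigenvectorUnitary : Matrix V V ℝ) *
      (star hA.eigenvectorUnitary : Matrix V V ℝ) = 1 :=
    Matrix.mem_unitaryGroup_iff.mp hA.eigenvectorUnitary.2
  have hd : Matrix.diagonal ((RCLike.ofReal (K := ℝ)) ∘ hA.eigenvalues)
      = Matrix.diagonal hA.eigenvalues := by congr 1
  have h3 : A.charpoly = (Matrix.diagonal hA.eigenvalues).charpoly := by
    conv_lhs => rw [hU]
    rw [hd, Unitary.conjStarAlgAut_apply, charpoly_conj _ _ _ h1]
  rw [h3, charpoly_diag, Finset.prod_eq_multiset_prod]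
  have h4 : Multiset.map (fun i => X - C (hA.eigenvalues i)) Finset.univ.val
      = Multiset.map (fun a => X - C a) (Multiset.map hA.eigenvalues Finset.univ.val) := by
    rw [Multiset.map_map]; rfl
  rw [h4, roots_multiset_prod_X_sub_C]

lemma sort_getD_max (s : Multiset ℝ) {x : ℝ} (hx : x ∈ s) :
    x ≤ (s.sort (· ≤ ·)).getD (s.card - 1) 0 := by
  set l := s.sort (· ≤ ·) with hl
  have hlen : l.length = s.card := s.length_sort _
  have hx' : x ∈ l := (Multiset.mem_sort _).mpr hx
  have hsorted : l.Pairwise (· ≤ ·) := s.pairwise_sort _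
  obtain ⟨i, hi, rfl⟩ := List.getElem_of_mem hx'
  have hpos : 0 < l.length := Nat.lt_of_le_of_lt (Nat.zero_le _) hi
  have hidx : s.card - 1 < l.length := by omega
  rw [List.getD_eq_getElem l 0 hidx]
  rcases Nat.lt_or_ge i (s.card - 1) with h | h
  · exact List.pairwise_iff_getElem.mp hsorted i (s.card - 1) hi hidx h
  · have : i = s.card - 1 := by omega
    subst this; rfl

lemma rayleigh_le (A : Matrix V V ℝ) (hA : A.IsHermitian) (x : V → ℝ) (ρ : ℝ)
    (hroots : ∀ i, hA.eigenvalues i ≤ ρ) :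
    x ⬝ᵥ (A *ᵥ x) ≤ ρ * (x ⬝ᵥ x) := by
  set U : Matrix V V ℝ := (hA.eigenvectorUnitary : Matrix V V ℝ)
  have hU1 : U * star U = 1 := Matrix.mem_unitaryGroup_iff.mp hA.eigenvectorUnitary.2
  have hd : Matrix.diagonal ((RCLike.ofReal (K := ℝ)) ∘ hA.eigenvalues)
      = Matrix.diagonal hA.eigenvalues := by congr 1
  have hspec : A = U * Matrix.diagonal hA.eigenvalues * star U := by
    conv_lhs => rw [hA.spectral_theorem]
    rw [hd, Unitary.conjStarAlgAut_apply]
  set y : V → ℝ := star U *ᵥ x with hy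
  have hstar : star U = Uᵀ := by
    ext i j; simp [Matrix.star_apply]
  have hxAx : x ⬝ᵥ (A *ᵥ x) = y ⬝ᵥ (Matrix.diagonal hA.eigenvalues *ᵥ y) := by
    conv_lhs => rw [hspec]
    rw [← Matrix.mulVec_mulVec, ← Matrix.mulVec_mulVec, Matrix.dotProduct_mulVec x U,
      hy, hstar, Matrix.mulVec_transpose]
  have hyy : y ⬝ᵥ y = x ⬝ᵥ x := by
    rw [hy, hstar, Matrix.mulVec_transpose, ← Matrix.dotProduct_mulVec,
      ← Matrix.mulVec_transpose, ← hstar, Matrix.mulVec_mulVec, hU1, Matrix.one_mulVec]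
  rw [hxAx, ← hyy]
  have hdi : y ⬝ᵥ (Matrix.diagonal hA.eigenvalues *ᵥ y)
      = ∑ i, hA.eigenvalues i * (y i * y i) := by
    simp only [dotProduct, Matrix.mulVec_diagonal]
    exact Finset.sum_congr rfl fun i _ => by ring
  rw [hdi, dotProduct, Finset.mul_sum]
  apply Finset.sum_le_sum
  intro i _
  exact mul_le_mul_of_nonneg_right (hroots i) (mul_self_nonneg _)

lemma normLap_isHermitian (G : SimpleGraph V) [DecidableRel G.Adj] :
    (normLap G).IsHermitian := by
  unfold Matrix.IsHermitian
  rw [conjTranspose_eq_transpose_of_trivial]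
  unfold normLap
  simp only [Matrix.transpose_mul, Matrix.diagonal_transpose, (G.isSymm_lapMatrix (R := ℝ)).eq]
  rw [Matrix.mul_assoc]

lemma rayleigh_graph (G : SimpleGraph V) [DecidableRel G.Adj]
    (hdeg : ∀ w, 0 < G.degree w) (x : V → ℝ) :
    x ⬝ᵥ (G.lapMatrix ℝ *ᵥ x) ≤ rhoL G * ∑ w, (G.degree w : ℝ) * x w ^ 2 := by
  set y : V → ℝ := fun w => Real.sqrt (G.degree w) * x w with hy
  have hsqrt : ∀ w, Real.sqrt (G.degree w) ≠ 0 := fun w =>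
    ne_of_gt (Real.sqrt_pos.mpr (by exact_mod_cast hdeg w))
  have hsym := normLap_isHermitian G
  have hbound : ∀ i, hsym.eigenvalues i ≤ rhoL G := by
    intro i
    have hmem : hsym.eigenvalues i ∈ (normLap G).charpoly.roots := by
      rw [roots_charpoly_herm _ hsym]
      exact Multiset.mem_map_of_mem _ (Finset.mem_univ_val i)
    have h5 := sort_getD_max _ hmem
    have hcard : Multiset.card (Finset.univ.val : Multiset V) = Fintype.card V :=
      (Finset.card_def _).symm.trans Finset.card_univ
    rw [roots_charpoly_herm _ hsym, Multiset.card_map, hcard] at h5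
    unfold rhoL nthEig
    rw [roots_charpoly_herm _ hsym]
    exact h5
  set Dd := Matrix.diagonal (fun v => (Real.sqrt (G.degree v : ℝ))⁻¹) with hDd
  have hDy : Dd *ᵥ y = x := by
    funext w
    rw [hDd, Matrix.mulVec_diagonal, hy]
    simp only []
    rw [inv_mul_cancel_left₀ (hsqrt w)]
  have hdot : ∀ z : V → ℝ, y ⬝ᵥ (Dd *ᵥ z) = x ⬝ᵥ z := by
    intro z
    simp only [dotProduct, hDd, Matrix.mulVec_diagonal, hy]
    refine Finset.sum_congr rfl fun w _ => ?_
    rw [mul_comm (Real.sqrt _) (x w), mul_assoc, mul_inv_cancel_left₀ (hsqrt w)]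
  have hMy : y ⬝ᵥ (normLap G *ᵥ y) = x ⬝ᵥ (G.lapMatrix ℝ *ᵥ x) := by
    unfold normLap
    rw [← hDd, ← Matrix.mulVec_mulVec, ← Matrix.mulVec_mulVec, hDy, hdot]
  have hyy : y ⬝ᵥ y = ∑ w, (G.degree w : ℝ) * x w ^ 2 := by
    simp only [dotProduct, hy]
    refine Finset.sum_congr rfl fun w _ => ?_
    have h6 : Real.sqrt (G.degree w) * Real.sqrt (G.degree w) = (G.degree w : ℝ) :=
      Real.mul_self_sqrt (by positivity)
    nlinarith [h6]
  calc x ⬝ᵥ (G.lapMatrix ℝ *ᵥ x) = y ⬝ᵥ (normLap G *ᵥ y) := hMy.symm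
    _ ≤ rhoL G * (y ⬝ᵥ y) := rayleigh_le _ hsym y _ hbound
    _ = rhoL G * ∑ w, (G.degree w : ℝ) * x w ^ 2 := by rw [hyy]

end Aux

section Comb
variable (G : SimpleGraph V) [DecidableRel G.Adj] {u v : V} (huv : G.Adj u v)

lemma subdivide_adj_inl_inl (a b : V) :
    (subdivide G u v).Adj (Sum.inl a) (Sum.inl b) ↔
      G.Adj a b ∧ ¬(a = u ∧ b = v) ∧ ¬(a = v ∧ b = u) := Iff.rfl

lemma subdivide_adj_inl_inr (a : V) (t : Unit) :
    (subdivide G u v).Adj (Sum.inl a) (Sum.inr t) ↔ (a = u ∨ a = v) := Iff.rfl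

lemma subdivide_adj_inr_inl (t : Unit) (b : V) :
    (subdivide G u v).Adj (Sum.inr t) (Sum.inl b) ↔ (b = u ∨ b = v) := Iff.rfl

lemma subdivide_adj_inr_inr (t s : Unit) :
    ¬ (subdivide G u v).Adj (Sum.inr t) (Sum.inr s) := fun h => h

/-- pointwise split of the adjacency indicator -/
lemma ite_adj_split {M : Type} [AddCommMonoid M] (c : V → V → M) (a b : V) :
    (if G.Adj a b then c a b else 0) =
      (if (subdivide G u v).Adj (Sum.inl a) (Sum.inl b) then c a b else 0) +
      (if G.Adj a b ∧ ((a = u ∧ b = v) ∨ (a = v ∧ b = u)) then c a b else 0) := by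
  by_cases h : G.Adj a b
  · by_cases hp : (a = u ∧ b = v) ∨ (a = v ∧ b = u)
    · have hn : ¬ (subdivide G u v).Adj (Sum.inl a) (Sum.inl b) := by
        intro hc
        rcases hp with hp | hp
        · exact hc.2.1 hp
        · exact hc.2.2 hp
      simp [h, hp, hn]
    · have hy : (subdivide G u v).Adj (Sum.inl a) (Sum.inl b) :=
        ⟨h, fun hc => hp (Or.inl hc), fun hc => hp (Or.inr hc)⟩
      simp [h, hp, hy]
  · have hn : ¬ (subdivide G u v).Adj (Sum.inl a) (Sum.inl b) := fun hc => h hc.1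
    simp [h, hn]

include huv in
lemma ite_pair_split {M : Type} [AddCommMonoid M] (c : V → V → M) (a b : V) :
    (if G.Adj a b ∧ ((a = u ∧ b = v) ∨ (a = v ∧ b = u)) then c a b else 0) =
      (if a = u ∧ b = v then c a b else 0) + (if a = v ∧ b = u then c a b else 0) := by
  have hne : u ≠ v := huv.ne
  by_cases hP : a = u ∧ b = v
  · rcases hP with ⟨rfl, rfl⟩
    have hQ : ¬(a = b ∧ b = a) := fun h => hne h.1
    simp [huv, hQ]
  · by_cases hQ : a = v ∧ b = u
    · rcases hQ with ⟨rfl, rfl⟩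
      simp [huv.symm, hP]
    · simp [hP, hQ]

include huv in
lemma sum_row_split {M : Type} [AddCommMonoid M] (c : V → V → M) (a : V) :
    ∑ b : V, (if G.Adj a b then c a b else 0) =
      (∑ b : V, if (subdivide G u v).Adj (Sum.inl a) (Sum.inl b) then c a b else 0)
      + ((if a = u then c a v else 0) + (if a = v then c a u else 0)) := by
  have h1 : ∀ b, (if G.Adj a b then c a b else 0) =
      (if (subdivide G u v).Adj (Sum.inl a) (Sum.inl b) then c a b else 0) +
      ((if a = u ∧ b = v then c a b else 0) + (if a = v ∧ b = u then c a b else 0)) := by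
    intro b
    rw [ite_adj_split G c a b, ite_pair_split G huv c a b]
  simp_rw [h1, Finset.sum_add_distrib]
  congr 1
  congr 1
  · by_cases h : a = u
    · subst h; simp
    · simp [h]
  · by_cases h : a = v
    · subst h; simp
    · simp [h]

include huv in
lemma sum_adj_split {M : Type} [AddCommMonoid M] (c : V → V → M) :
    ∑ a : V, ∑ b : V, (if G.Adj a b then c a b else 0) =
      (∑ a : V, ∑ b : V,
        (if (subdivide G u v).Adj (Sum.inl a) (Sum.inl b) then c a b else 0))
      + (c u v + c v u) := by
  simp_rw [sum_row_split G huv c, Finset.sum_add_distrib]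
  congr 1
  congr 1
  · simp
  · simp [huv.ne]

include huv in
lemma degree_subdivide_inl (a : V) :
    (subdivide G u v).degree (Sum.inl a) = G.degree a := by
  have hne : u ≠ v := huv.ne
  have h1 := SimpleGraph.degree_eq_sum_if_adj (R := ℕ) (subdivide G u v) (Sum.inl a)
  have h2 := SimpleGraph.degree_eq_sum_if_adj (R := ℕ) G a
  simp only [Nat.cast_id] at h1 h2
  rw [h1, h2, Fintype.sum_sum_type]
  rw [sum_row_split G huv (fun _ _ => (1 : ℕ)) a]
  have h3 : (∑ _x : Unit, if (subdivide G u v).Adj (Sum.inl a) (Sum.inr _x) then 1 else 0)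
      = ((if a = u then 1 else 0) + (if a = v then 1 else 0) : ℕ) := by
    rw [Fintype.sum_unique]
    simp only [subdivide_adj_inl_inr]
    by_cases h : a = u
    · subst h; simp [hne]
    · by_cases h' : a = v <;> simp [h, h', hne.symm]
  rw [h3]

include huv in
lemma quad_subdivide (f : V → ℝ) :
    (Sum.elim f 0) ⬝ᵥ ((subdivide G u v).lapMatrix ℝ *ᵥ (Sum.elim f 0))
      = f ⬝ᵥ (G.lapMatrix ℝ *ᵥ f) + 2 * (f u * f v) := by
  have hne : u ≠ v := huv.ne
  set g : V ⊕ Unit → ℝ := Sum.elim f 0 with hg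
  have hgl : ∀ a : V, g (Sum.inl a) = f a := fun a => rfl
  have hgr : ∀ t : Unit, g (Sum.inr t) = 0 := fun t => rfl
  rw [← Matrix.toLinearMap₂'_apply', SimpleGraph.lapMatrix_toLinearMap₂',
      ← Matrix.toLinearMap₂'_apply', SimpleGraph.lapMatrix_toLinearMap₂']
  have hmain : (∑ p : V ⊕ Unit, ∑ q : V ⊕ Unit,
      if (subdivide G u v).Adj p q then (g p - g q) ^ 2 else 0)
      = (∑ a : V, ∑ b : V, if G.Adj a b then (f a - f b) ^ 2 else 0)
        + 4 * (f u * f v) := by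
    rw [Fintype.sum_sum_type]
    have hrow1 : ∀ a : V, (∑ q : V ⊕ Unit,
        if (subdivide G u v).Adj (Sum.inl a) q then (g (Sum.inl a) - g q) ^ 2 else 0)
        = (∑ b : V, if (subdivide G u v).Adj (Sum.inl a) (Sum.inl b) then (f a - f b) ^ 2 else 0)
          + (if a = u ∨ a = v then f a ^ 2 else 0) := by
      intro a
      rw [Fintype.sum_sum_type]
      simp only [Finset.univ_unique, Finset.sum_singleton]
      simp only [hgl, hgr, sub_zero, subdivide_adj_inl_inr]
    have hrow2 : (∑ t : Unit, ∑ q : V ⊕ Unit,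
        if (subdivide G u v).Adj (Sum.inr t) q then (g (Sum.inr t) - g q) ^ 2 else 0)
        = ∑ b : V, if b = u ∨ b = v then f b ^ 2 else 0 := by
      simp only [Finset.univ_unique, Finset.sum_singleton]
      rw [Fintype.sum_sum_type]
      simp only [Finset.univ_unique, Finset.sum_singleton]
      have hnr : ¬ (subdivide G u v).Adj (Sum.inr default) (Sum.inr default) :=
        subdivide_adj_inr_inr G default default
      simp only [hgl, hgr, zero_sub, neg_sq, subdivide_adj_inr_inl, hnr, if_false]
      simp
    rw [hrow2]
    simp_rw [hrow1]
    rw [Finset.sum_add_distrib]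
    have hsplit := sum_adj_split G huv (fun a b => (f a - f b) ^ 2)
    have hor : ∀ (a : V), (if a = u ∨ a = v then f a ^ 2 else 0)
        = (if a = u then f u ^ 2 else 0) + (if a = v then f v ^ 2 else 0) := by
      intro a
      by_cases h : a = u
      · subst h; simp [hne]
      · by_cases h' : a = v
        · subst h'; simp [h]
        · simp [h, h']
    have hsum_or : (∑ a : V, if a = u ∨ a = v then f a ^ 2 else 0) = f u ^ 2 + f v ^ 2 := by
      simp_rw [hor, Finset.sum_add_distrib]
      simp
    rw [hsum_or]
    have h11 : (∑ a : V, ∑ b : V,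
        if (subdivide G u v).Adj (Sum.inl a) (Sum.inl b) then (f a - f b) ^ 2 else 0)
        = (∑ a : V, ∑ b : V, if G.Adj a b then (f a - f b) ^ 2 else 0)
          - ((f u - f v) ^ 2 + (f v - f u) ^ 2) := by
      rw [hsplit]; ring
    rw [h11]
    ring
  rw [hmain]
  ring

include huv in
lemma denom_subdivide (f : V → ℝ) :
    (∑ x : V ⊕ Unit, ((subdivide G u v).degree x : ℝ) * (Sum.elim f 0 x) ^ 2)
      = ∑ w : V, (G.degree w : ℝ) * f w ^ 2 := by
  set g : V ⊕ Unit → ℝ := Sum.elim f 0 with hg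
  have hgl : ∀ a : V, g (Sum.inl a) = f a := fun a => rfl
  have hgr : ∀ t : Unit, g (Sum.inr t) = 0 := fun t => rfl
  rw [Fintype.sum_sum_type]
  have h0 : (∑ t : Unit, ((subdivide G u v).degree (Sum.inr t) : ℝ) * (g (Sum.inr t)) ^ 2) = 0 := by
    rw [Fintype.sum_unique, hgr]
    ring
  rw [h0, add_zero]
  refine Finset.sum_congr rfl fun a _ => ?_
  rw [hgl, degree_subdivide_inl G huv a]
end Comb

/-- Theorem 4.1: let `G' = G - uv + uw + wv` be obtained by subdividing the edge `uv` and let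
`f` be a harmonic eigenfunction associated with `ρ(𝓛(G))`. If `f(u)f(v) ≥ 0` then
`ρ(𝓛(G)) ≤ ρ(𝓛(G'))`, and the inequality is strict if `f(u)f(v) > 0`. -/
theorem stmt14 {V : Type} [Fintype V] [DecidableEq V] (G : SimpleGraph V) [DecidableRel G.Adj]
    (hG : G.Connected) (u v : V) (huv : G.Adj u v) (f : V → ℝ)
    (hf : IsHarmonic G (rhoL G) f) (hfuv : 0 ≤ f u * f v) :
    rhoL G ≤ rhoL (subdivide G u v) ∧
      (0 < f u * f v → rhoL G < rhoL (subdivide G u v)) := by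
  classical
  obtain ⟨hf0, hfeq⟩ := hf
  have hne : u ≠ v := huv.ne
  have hdeg : ∀ a : V, 0 < G.degree a := by
    intro a
    rw [SimpleGraph.degree_pos_iff_exists_adj]
    by_cases h : a = u
    · exact ⟨v, h ▸ huv⟩
    · obtain ⟨w⟩ := hG.preconnected a u
      cases w with
      | nil => exact absurd rfl h
      | cons hadj _ => exact ⟨_, hadj⟩
  have hdeg' : ∀ x : V ⊕ Unit, 0 < (subdivide G u v).degree x := by
    rintro (a | t)
    · rw [degree_subdivide_inl G huv a]; exact hdeg a
    · rw [SimpleGraph.degree_pos_iff_exists_adj]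
      exact ⟨Sum.inl u, Or.inl rfl⟩
  set Den := ∑ w : V, (G.degree w : ℝ) * f w ^ 2 with hDen
  have hDenpos : 0 < Den := by
    obtain ⟨v0, hv0⟩ := Function.ne_iff.mp hf0
    have hv0' : f v0 ≠ 0 := by simpa using hv0
    refine Finset.sum_pos' (fun w _ => by positivity) ⟨v0, Finset.mem_univ v0, ?_⟩
    have h1 : (0:ℝ) < G.degree v0 := by exact_mod_cast hdeg v0
    have h2 : 0 < f v0 ^ 2 := by positivity
    exact mul_pos h1 h2
  have hNum : f ⬝ᵥ (G.lapMatrix ℝ *ᵥ f) = rhoL G * Den := by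
    rw [hfeq, hDen]
    simp only [dotProduct]
    rw [Finset.mul_sum]
    refine Finset.sum_congr rfl fun w _ => ?_
    ring
  have hkey := rayleigh_graph (subdivide G u v) hdeg' (Sum.elim f 0)
  rw [quad_subdivide G huv f, denom_subdivide G huv f, hNum] at hkey
  constructor
  · have h3 : rhoL G * Den ≤ rhoL (subdivide G u v) * Den := by nlinarith
    exact le_of_mul_le_mul_right h3 hDenpos
  · intro hpos
    have h3 : rhoL G * Den < rhoL (subdivide G u v) * Den := by nlinarith
    exact lt_of_mul_lt_mul_right h3 hDenpos.le

end NLap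
end
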